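/- Let Q = diag(q_1, ..., q_ν) be real diagonal, B a ν × ν matrix with B_{ij} = 0 unless i ~ j for some graph adjacency relation ~ on {1,...,ν}, let a = q_n be a simple eigenvalue of Q, and let P(ε) = (2πi)^{-1} ∮_{|λ-a|=ϵ} (λ - Q - εB)^{-1} dλ be the spectral projection. Then for i ≠ n, the entry P_{in}(ε) is O(ε^{d(i,n)}) as ε → 0, where d(i,n) is the graph distance from i to n in the graph with adjacency ~. -/

import Mathlib

open Matrix

attribute [local instance] Matrix.linftyOpNormedRing Matrix.linftyOpNormedSpace

/-- Entry bound for the linfty operator norm. -/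
private lemma entry_norm_le {ν : ℕ} (A : Matrix (Fin ν) (Fin ν) ℂ) (i j : Fin ν) :
    ‖A i j‖ ≤ ‖A‖ := by
  have h : ‖A i j‖₊ ≤ ‖A‖₊ := by
    rw [Matrix.linfty_opNNNorm_def]
    calc ‖A i j‖₊ ≤ ∑ j', ‖A i j'‖₊ :=
          Finset.single_le_sum (f := fun j' => ‖A i j'‖₊) (fun _ _ => zero_le)
            (Finset.mem_univ j)
      _ ≤ _ := Finset.le_sup (f := fun i => ∑ j', ‖A i j'‖₊) (Finset.mem_univ i)
  exact_mod_cast h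

/-- If the `(x, n)` entry of `(D B)^k D` is nonzero (with `D` diagonal), then there is a
walk of length at most `k` from `x` to `n` in the graph defined by the sparsity of `B`. -/
private lemma dist_le_of_entry_ne {ν : ℕ} (B : Matrix (Fin ν) (Fin ν) ℂ)
    (G : SimpleGraph (Fin ν)) (hG : G = SimpleGraph.fromRel fun i j => B i j ≠ 0)
    (hconn : G.Connected) (n : Fin ν) (r : Fin ν → ℂ) :
    ∀ (k : ℕ) (x : Fin ν),
      ((Matrix.diagonal r * B) ^ k * Matrix.diagonal r) x n ≠ 0 → G.dist x n ≤ k := by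
  intro k
  induction k with
  | zero =>
    intro x hx
    rw [pow_zero, one_mul] at hx
    have hxn : x = n := by
      by_contra h
      exact hx (Matrix.diagonal_apply_ne r h)
    subst hxn
    simp [SimpleGraph.dist_self]
  | succ k ih =>
    intro x hx
    rw [pow_succ', Matrix.mul_assoc] at hx
    rw [Matrix.mul_apply] at hx
    obtain ⟨y, -, hy⟩ := Finset.exists_ne_zero_of_sum_ne_zero hx
    have hB : B x y ≠ 0 := by
      intro h
      apply hy
      rw [Matrix.diagonal_mul, h, mul_zero, zero_mul]
    have htail : ((Matrix.diagonal r * B) ^ k * Matrix.diagonal r) y n ≠ 0 :=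
      right_ne_zero_of_mul hy
    have hyn := ih y htail
    rcases eq_or_ne x y with rfl | hxy
    · exact hyn.trans (Nat.le_succ k)
    · have hadj : G.Adj x y := by
        rw [hG]
        exact ⟨hxy, Or.inl hB⟩
      have h1 : G.dist x y ≤ 1 := by
        have := SimpleGraph.dist_le (SimpleGraph.Walk.cons hadj SimpleGraph.Walk.nil)
        simpa using this
      calc G.dist x n ≤ G.dist x y + G.dist y n := hconn.dist_triangle
        _ ≤ 1 + k := add_le_add h1 hyn
        _ = k + 1 := by omega

/-- Decay of spectral projection entries: let `Q = diag(q)` be real diagonal with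
simple eigenvalue `a = q_n`, `B` a matrix whose sparsity pattern defines a connected
graph on `{1,...,ν}`, and let `P(ε)` be the Riesz spectral projection of `Q + εB`
given by the contour integral over `|λ - a| = ϵ`. Then for `i ≠ n`, the entry
`P_{in}(ε)` is `O(ε^{d(i,n)})` as `ε → 0`, with `d` the graph distance. -/
theorem spectral_projection_entry_decay {ν : ℕ}
    (q : Fin ν → ℝ) (n : Fin ν) (hsimple : ∀ i, i ≠ n → q i ≠ q n)
    (B : Matrix (Fin ν) (Fin ν) ℂ)
    (G : SimpleGraph (Fin ν)) (hG : G = SimpleGraph.fromRel fun i j => B i j ≠ 0)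
    (hconn : G.Connected)
    (ϵ : ℝ) (hϵ : 0 < ϵ) (hϵ' : ∀ i, i ≠ n → ϵ < |q i - q n|)
    (P : ℝ → Matrix (Fin ν) (Fin ν) ℂ)
    (hP : ∀ (ε : ℝ) (i j : Fin ν), P ε i j =
      (2 * Real.pi * Complex.I)⁻¹ *
        ∮ z in C((q n : ℂ), ϵ),
          ((z • (1 : Matrix (Fin ν) (Fin ν) ℂ) - Matrix.diagonal (fun t => (q t : ℂ)) -
            (ε : ℂ) • B)⁻¹ i j))
    (i : Fin ν) (hi : i ≠ n) :
    (fun ε : ℝ => P ε i n) =O[nhds 0] fun ε : ℝ => ε ^ G.dist i n := by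
  classical
  have hne : Nonempty (Fin ν) := ⟨n⟩
  set d := G.dist i n with hd
  -- the minimal distance from the contour to the eigenvalues
  set δ : ℝ := Finset.univ.inf' Finset.univ_nonempty
      (fun t => if t = n then ϵ else |q t - q n| - ϵ) with hδ
  have hδpos : 0 < δ := by
    rw [hδ, Finset.lt_inf'_iff]
    intro t _
    by_cases h : t = n
    · simpa [h] using hϵ
    · simp only [h, if_false]
      linarith [hϵ' t h]
  have hδle : ∀ t, δ ≤ if t = n then ϵ else |q t - q n| - ϵ := fun t =>
    Finset.inf'_le _ (Finset.mem_univ t)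
  have hδϵ : δ ≤ ϵ := by simpa using hδle n
  -- distance from contour points to each q t
  have hδz : ∀ z : ℂ, z ∈ Metric.sphere ((q n : ℂ)) ϵ → ∀ t, δ ≤ ‖z - (q t : ℂ)‖ := by
    intro z hz t
    have hzn : ‖z - (q n : ℂ)‖ = ϵ := mem_sphere_iff_norm.mp hz
    by_cases h : t = n
    · subst h; rw [hzn]; exact hδϵ
    · have h1 : |q t - q n| = ‖((q t : ℂ)) - (q n : ℂ)‖ := by
        rw [← Complex.ofReal_sub, Complex.norm_real, Real.norm_eq_abs]
      have h2 : ‖((q t : ℂ)) - (q n : ℂ)‖ ≤ ‖(q t : ℂ) - z‖ + ‖z - (q n : ℂ)‖ := by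
        simpa using norm_sub_le_norm_sub_add_norm_sub ((q t : ℂ)) z ((q n : ℂ))
      have h3 : ‖(q t : ℂ) - z‖ = ‖z - (q t : ℂ)‖ := norm_sub_rev _ _
      have := hδle t
      rw [if_neg h] at this
      rw [hzn] at h2
      rw [h1] at this
      rw [h3] at h2
      linarith
  set Cb : ℝ := ‖B‖ with hCb
  have hCb0 : 0 ≤ Cb := norm_nonneg _
  have hδinv : 0 ≤ δ⁻¹ := le_of_lt (inv_pos.mpr hδpos)
  set ε₀ : ℝ := min 1 (1 / (2 * (δ⁻¹ * Cb + 1))) with hε₀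
  have hε₀pos : 0 < ε₀ := by
    apply lt_min one_pos
    positivity
  set C' : ℝ := 2 * δ⁻¹ * (δ⁻¹ * Cb) ^ d with hC'
  have hC'0 : 0 ≤ C' := by positivity
  -- the pointwise resolvent entry estimate
  have key : ∀ (ε : ℝ), |ε| ≤ ε₀ → ∀ z : ℂ, z ∈ Metric.sphere ((q n : ℂ)) ϵ →
      ‖((z • (1 : Matrix (Fin ν) (Fin ν) ℂ) - Matrix.diagonal (fun t => (q t : ℂ)) -
          (ε : ℂ) • B)⁻¹ i n)‖ ≤ C' * |ε| ^ d := by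
    intro ε hε z hz
    have hzq : ∀ t, z - (q t : ℂ) ≠ 0 := by
      intro t h
      have := hδz z hz t
      rw [h, norm_zero] at this
      linarith
    set r : Fin ν → ℂ := fun t => (z - (q t : ℂ))⁻¹ with hr
    set R : Matrix (Fin ν) (Fin ν) ℂ := Matrix.diagonal r with hR
    set A : Matrix (Fin ν) (Fin ν) ℂ :=
      z • (1 : Matrix (Fin ν) (Fin ν) ℂ) - Matrix.diagonal (fun t => (q t : ℂ)) with hA
    have hAdiag : A = Matrix.diagonal (fun t => z - (q t : ℂ)) := by
      rw [hA, smul_one_eq_diagonal, Matrix.diagonal_sub]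
    have hAR : A * R = 1 := by
      rw [hAdiag, hR, Matrix.diagonal_mul_diagonal]
      have h1 : (fun t => (z - (q t : ℂ)) * r t) = fun _ => (1 : ℂ) :=
        funext fun t => mul_inv_cancel₀ (hzq t)
      rw [h1, Matrix.diagonal_one]
    have hRA : R * A = 1 := by
      rw [hAdiag, hR, Matrix.diagonal_mul_diagonal]
      have h1 : (fun t => r t * (z - (q t : ℂ))) = fun _ => (1 : ℂ) :=
        funext fun t => inv_mul_cancel₀ (hzq t)
      rw [h1, Matrix.diagonal_one]
    have hRnorm : ‖R‖ ≤ δ⁻¹ := by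
      rw [hR, Matrix.linfty_opNorm_diagonal]
      apply pi_norm_le_iff_of_nonneg hδinv |>.mpr
      intro t
      rw [hr]
      simp only [norm_inv]
      exact inv_anti₀ hδpos (hδz z hz t)
    set X : Matrix (Fin ν) (Fin ν) ℂ := (ε : ℂ) • (R * B) with hX
    have hXnorm : ‖X‖ ≤ |ε| * (δ⁻¹ * Cb) := by
      rw [hX, norm_smul, Complex.norm_real, Real.norm_eq_abs]
      gcongr
      calc ‖R * B‖ ≤ ‖R‖ * ‖B‖ := Matrix.linfty_opNorm_mul R B
        _ ≤ δ⁻¹ * Cb := by gcongr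
    have hXhalf : ‖X‖ ≤ 1 / 2 := by
      have h1 : |ε| ≤ 1 / (2 * (δ⁻¹ * Cb + 1)) := hε.trans (min_le_right _ _)
      have h2 : (0:ℝ) < 2 * (δ⁻¹ * Cb + 1) := by positivity
      calc ‖X‖ ≤ |ε| * (δ⁻¹ * Cb) := hXnorm
        _ ≤ (1 / (2 * (δ⁻¹ * Cb + 1))) * (δ⁻¹ * Cb) := by
            gcongr
        _ ≤ 1 / 2 := by
            rw [div_mul_eq_mul_div, div_le_div_iff₀ h2 two_pos]
            nlinarith [abs_nonneg ε]
    -- `1 - X` is invertible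
    have hdet1X : (1 - X).det ≠ 0 := by
      intro h
      obtain ⟨v, hv0, hv⟩ := (Matrix.exists_mulVec_eq_zero_iff).mpr h
      have hveq : v = X *ᵥ v := by
        have : (1 - X) *ᵥ v = v - X *ᵥ v := by
          rw [Matrix.sub_mulVec, Matrix.one_mulVec]
        rw [this] at hv
        rwa [sub_eq_zero] at hv
      have hnv : ‖v‖ ≤ (1 / 2) * ‖v‖ := by
        calc ‖v‖ = ‖X *ᵥ v‖ := by rw [← hveq]
          _ ≤ ‖X‖ * ‖v‖ := Matrix.linfty_opNorm_mulVec X v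
          _ ≤ (1 / 2) * ‖v‖ := by gcongr
      have : ‖v‖ = 0 := by linarith [norm_nonneg v]
      exact hv0 (norm_eq_zero.mp this)
    have hU : IsUnit (1 - X).det := isUnit_iff_ne_zero.mpr hdet1X
    set Y : Matrix (Fin ν) (Fin ν) ℂ := (1 - X)⁻¹ with hY
    have hY1 : (1 - X) * Y = 1 := Matrix.mul_nonsing_inv _ hU
    have hY2 : Y * (1 - X) = 1 := Matrix.nonsing_inv_mul _ hU
    have hYnorm : ‖Y‖ ≤ 2 := by
      have hid : Y = 1 + Y * X := by
        have : Y * (1 - X) + Y * X = 1 + Y * X := by rw [hY2]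
        calc Y = Y * (1 - X) + Y * X := by noncomm_ring
          _ = 1 + Y * X := this
      have h1 : ‖Y‖ ≤ ‖(1 : Matrix (Fin ν) (Fin ν) ℂ)‖ + ‖Y‖ * ‖X‖ := by
        calc ‖Y‖ = ‖(1 : Matrix (Fin ν) (Fin ν) ℂ) + Y * X‖ := by rw [← hid]
          _ ≤ ‖(1 : Matrix (Fin ν) (Fin ν) ℂ)‖ + ‖Y * X‖ := norm_add_le _ _
          _ ≤ _ := by gcongr; exact Matrix.linfty_opNorm_mul Y X
      have hone : ‖(1 : Matrix (Fin ν) (Fin ν) ℂ)‖ = 1 := norm_one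
      rw [hone] at h1
      nlinarith [norm_nonneg Y, hXhalf, norm_nonneg X]
    set M : Matrix (Fin ν) (Fin ν) ℂ := A - (ε : ℂ) • B with hM
    have hMfact : M = A * (1 - X) := by
      rw [hM, hX, mul_sub, mul_one, Matrix.mul_smul, ← Matrix.mul_assoc, hAR, one_mul]
    have hdetA : A.det ≠ 0 := by
      rw [hAdiag, Matrix.det_diagonal]
      exact Finset.prod_ne_zero_iff.mpr fun t _ => hzq t
    have hAinv : A⁻¹ = R := Matrix.inv_eq_right_inv hAR
    have hMinv : M⁻¹ = Y * R := by
      rw [hMfact, Matrix.mul_inv_rev, hAinv, hY]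
    -- geometric expansion: Y = (∑ k < d, X^k) + Y * X^d
    have hgeom : Y = (∑ k ∈ Finset.range d, X ^ k) + Y * X ^ d := by
      have hgs : (1 - X) * (∑ k ∈ Finset.range d, X ^ k) = 1 - X ^ d := by
        have := mul_geom_sum (x := X) d
        linear_combination (norm := noncomm_ring) -this
      calc Y = Y * ((1 - X) * (∑ k ∈ Finset.range d, X ^ k) + X ^ d) := by
              rw [hgs]; noncomm_ring
        _ = (Y * (1 - X)) * (∑ k ∈ Finset.range d, X ^ k) + Y * X ^ d := by noncomm_ring
        _ = (∑ k ∈ Finset.range d, X ^ k) + Y * X ^ d := by rw [hY2, one_mul]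
    -- the entry of the leading terms vanishes
    have hvanish : ∀ k, k < d → (X ^ k * R) i n = 0 := by
      intro k hk
      rw [hX, smul_pow, Matrix.smul_mul, Matrix.smul_apply]
      have h0 : ((R * B) ^ k * R) i n = 0 := by
        by_contra h
        have := dist_le_of_entry_ne B G hG hconn n r k i (by rwa [← hR])
        omega
      rw [h0, smul_zero]
    have hsum0 : ((∑ k ∈ Finset.range d, X ^ k) * R) i n = 0 := by
      rw [Finset.sum_mul, Matrix.sum_apply]
      exact Finset.sum_eq_zero fun k hk => hvanish k (Finset.mem_range.mp hk)
    have hMR : M⁻¹ = (∑ k ∈ Finset.range d, X ^ k) * R + Y * X ^ d * R := by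
      rw [hMinv]
      conv_lhs => rw [hgeom]
      rw [Matrix.add_mul]
    have hentry : M⁻¹ i n = (Y * X ^ d * R) i n := by
      rw [hMR, Matrix.add_apply, hsum0, zero_add]
    -- final norm estimate
    have hXd : ‖X ^ d‖ ≤ (|ε| * (δ⁻¹ * Cb)) ^ d := by
      have hdpos : 0 < d := hconn.pos_dist_of_ne hi
      calc ‖X ^ d‖ ≤ ‖X‖ ^ d := norm_pow_le' X hdpos
        _ ≤ (|ε| * (δ⁻¹ * Cb)) ^ d := pow_le_pow_left₀ (norm_nonneg X) hXnorm d
    have : ‖M⁻¹ i n‖ ≤ C' * |ε| ^ d := by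
      rw [hentry]
      calc ‖(Y * X ^ d * R) i n‖ ≤ ‖Y * X ^ d * R‖ := entry_norm_le _ i n
        _ ≤ ‖Y * X ^ d‖ * ‖R‖ := Matrix.linfty_opNorm_mul _ _
        _ ≤ (‖Y‖ * ‖X ^ d‖) * ‖R‖ :=
            mul_le_mul_of_nonneg_right (Matrix.linfty_opNorm_mul _ _) (norm_nonneg _)
        _ ≤ (2 * (|ε| * (δ⁻¹ * Cb)) ^ d) * δ⁻¹ :=
            mul_le_mul (mul_le_mul hYnorm hXd (norm_nonneg _) (by norm_num))
              hRnorm (norm_nonneg _) (by positivity)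
        _ = C' * |ε| ^ d := by rw [hC', mul_pow]; ring
    exact this
  -- conclude the big-O statement
  rw [Asymptotics.isBigO_iff]
  refine ⟨ϵ * C', ?_⟩
  have hmem : Metric.ball (0 : ℝ) ε₀ ∈ nhds (0 : ℝ) := Metric.ball_mem_nhds 0 hε₀pos
  filter_upwards [hmem] with ε hε
  have hεabs : |ε| ≤ ε₀ := by
    rw [Metric.mem_ball, Real.dist_eq, sub_zero] at hε
    exact le_of_lt hε
  rw [hP]
  have hbound : ‖∮ z in C((q n : ℂ), ϵ),
      ((z • (1 : Matrix (Fin ν) (Fin ν) ℂ) - Matrix.diagonal (fun t => (q t : ℂ)) -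
        (ε : ℂ) • B)⁻¹ i n)‖ ≤ 2 * Real.pi * ϵ * (C' * |ε| ^ d) := by
    apply circleIntegral.norm_integral_le_of_norm_le_const (le_of_lt hϵ)
    intro z hz
    exact key ε hεabs z hz
  have hπ : ‖(2 * (Real.pi : ℂ) * Complex.I)⁻¹‖ = (2 * Real.pi)⁻¹ := by
    rw [norm_inv, norm_mul, norm_mul, Complex.norm_I, mul_one, Complex.norm_real,
      Real.norm_eq_abs, abs_of_pos Real.pi_pos]
    norm_num
  rw [norm_mul, hπ]
  have hπpos : (0:ℝ) < 2 * Real.pi := by positivity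
  calc (2 * Real.pi)⁻¹ * ‖∮ z in C((q n : ℂ), ϵ),
        ((z • (1 : Matrix (Fin ν) (Fin ν) ℂ) - Matrix.diagonal (fun t => (q t : ℂ)) -
          (ε : ℂ) • B)⁻¹ i n)‖
      ≤ (2 * Real.pi)⁻¹ * (2 * Real.pi * ϵ * (C' * |ε| ^ d)) := by
        gcongr
    _ = ϵ * C' * |ε| ^ d := by
        field_simp
    _ ≤ ϵ * C' * ‖ε ^ d‖ := by
        rw [norm_pow, Real.norm_eq_abs]
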